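/- arXiv:2110.12533 — 3 statements merged into one kernel-verified Lean document; each statement's English description precedes it below -/
import Mathlib

section
/- Fix an iteration index k ≥ 0 and a regularization parameter t_k > 0. For each i = 1,…,m let B_{k,i} be a (possibly empty) subset of {l ∈ ℤ : 0 ≤ l ≤ k}, let x_0, x_1, …, x_k be points of X, and for each i and each l ∈ B_{k,i} let g_i(x_{k−l}) be a subgradient of f_i at x_{k−l}. Define for each i the model ĥ_{k,i}(x) = max_{l ∈ B_{k,i}} [ f_i(x_{k−l}) + ⟨g_i(x_{k−l}), x − x_{k−l}⟩ ] if B_{k,i} ≠ ∅, and ĥ_{k,i}(x) = 0 if B_{k,i} = ∅, and set f̆_k(x) = Σ_{i=1}^m ĥ_{k,i}(x) + (1/(2 t_k))‖x − x_k‖². If x_{k+1} ∈ X minimizes f̆_k over X, then there exist nonnegative weights α_{k,i,l} ≥ 0 (i = 1,…,m, l ∈ B_{k,i}) with Σ_{l ∈ B_{k,i}} α_{k,i,l} = 1 whenever B_{k,i} ≠ ∅, such that x_{k+1} = P_X( x_k − t_k Σ_{i=1}^m Σ_{l ∈ B_{k,i}} α_{k,i,l} g_i(x_{k−l}) ), where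 an empty sum is interpreted as 0. -/
open RealInnerProductSpace Pointwise

set_option maxHeartbeats 1000000

/-- If `xnext` minimizes over `X` the regularized cutting-plane
model `f̆ k (z) = ∑ i, ĥ i z + (1 / (2 tk)) ‖z - x k‖²`, where
`ĥ i z = max_{l ∈ B i} (f i (x (k-l)) + ⟪g i (k-l), z - x (k-l)⟫)` when
`B i ≠ ∅` and `ĥ i z = 0` otherwise, then there exist nonnegative weights
`α i l` summing to `1` over each nonempty `B i` such that
`xnext = P (x k - tk • ∑ i, ∑ l ∈ B i, α i l • g i (k - l))`. -/
theorem incremental_cp_minimizer_is_projected_step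
    (n m : ℕ)
    (X : Set (EuclideanSpace ℝ (Fin n)))
    (hXne : X.Nonempty) (hXclosed : IsClosed X) (hXconvex : Convex ℝ X)
    (f : Fin m → EuclideanSpace ℝ (Fin n) → ℝ)
    (hfconv : ∀ i, ConvexOn ℝ Set.univ (f i))
    (C : ℝ) (hC : 0 < C)
    -- every subgradient of any `f i` at any point of `X` has norm at most `C`
    (hCbound : ∀ i, ∀ z ∈ X, ∀ g : EuclideanSpace ℝ (Fin n),
      (∀ y, f i z + ⟪g, y - z⟫ ≤ f i y) → ‖g‖ ≤ C)
    -- `P` is the Euclidean projection onto `X`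
    (P : EuclideanSpace ℝ (Fin n) → EuclideanSpace ℝ (Fin n))
    (hP : ∀ u, P u ∈ X ∧ ∀ y ∈ X, ‖u - P u‖ ≤ ‖u - y‖)
    -- the iteration index `k` and the regularization parameter `tk > 0`
    (k : ℕ) (tk : ℝ) (htk : 0 < tk)
    -- the previous points `x 0, …, x k`, points of `X`
    (x : ℕ → EuclideanSpace ℝ (Fin n)) (hx : ∀ j, j ≤ k → x j ∈ X)
    -- the index sets `B i ⊆ {0, …, k}` (possibly empty)
    (B : Fin m → Finset ℕ)
    (hB : ∀ i, ∀ l ∈ B i, l ≤ k)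
    -- `g i (k - l)` is a subgradient of `f i` at `x (k - l)` for `l ∈ B i`
    (g : Fin m → ℕ → EuclideanSpace ℝ (Fin n))
    (hg : ∀ i, ∀ l ∈ B i, ∀ y,
      f i (x (k - l)) + ⟪g i (k - l), y - x (k - l)⟫ ≤ f i y)
    -- `xnext` minimizes the regularized model `f̆ k` over `X`
    (xnext : EuclideanSpace ℝ (Fin n)) (hxnextX : xnext ∈ X)
    (hmin : ∀ z ∈ X,
      ((∑ i : Fin m,
          if hne : (B i).Nonempty then
            (B i).sup' hne
              (fun l => f i (x (k - l)) + ⟪g i (k - l), xnext - x (k - l)⟫)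
          else 0) +
        1 / (2 * tk) * ‖xnext - x k‖ ^ 2) ≤
      ((∑ i : Fin m,
          if hne : (B i).Nonempty then
            (B i).sup' hne
              (fun l => f i (x (k - l)) + ⟪g i (k - l), z - x (k - l)⟫)
          else 0) +
        1 / (2 * tk) * ‖z - x k‖ ^ 2)) :
    ∃ α : Fin m → ℕ → ℝ,
      (∀ i l, 0 ≤ α i l) ∧
      (∀ i, (B i).Nonempty → ∑ l ∈ B i, α i l = 1) ∧
      xnext = P (x k - tk • ∑ i : Fin m, ∑ l ∈ B i, α i l • g i (k - l)) := by
  classical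
  set v : EuclideanSpace ℝ (Fin n) := (1 / tk) • (x k - xnext) with hv
  set Qi : Fin m → EuclideanSpace ℝ (Fin n) → ℝ :=
    fun i z => if h : (B i).Nonempty then (B i).sup' h (fun l => ⟪g i (k - l), z⟫) else 0
    with hQi
  set Q : EuclideanSpace ℝ (Fin n) → ℝ := fun z => ∑ i, Qi i z with hQ
  set Φ : (Fin m → ℕ → ℝ) → EuclideanSpace ℝ (Fin n) :=
    fun α => ∑ i, ∑ l ∈ B i, α i l • g i (k - l) with hΦ
  set A : Set (Fin m → ℕ → ℝ) :=
    {α | (∀ i l, 0 ≤ α i l) ∧ (∀ i l, α i l ≤ 1) ∧ (∀ i l, l ∉ B i → α i l = 0) ∧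
      ∀ i, (B i).Nonempty → ∑ l ∈ B i, α i l = 1} with hA
  set D : Set (EuclideanSpace ℝ (Fin n)) := Φ '' A with hD
  set N : Set (EuclideanSpace ℝ (Fin n)) := {w | ∀ y ∈ X, ⟪w, y - xnext⟫ ≤ 0} with hN
  set S : Set (EuclideanSpace ℝ (Fin n)) := (fun y => y - xnext) '' X with hS
  -- continuity of coordinate evaluations
  have hev : ∀ (i : Fin m) (l : ℕ), Continuous fun α : Fin m → ℕ → ℝ => α i l :=
    fun i l => (continuous_apply l).comp (continuous_apply i)
  -- Φ is continuous
  have hΦcont : Continuous Φ := by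
    rw [hΦ]
    exact continuous_finset_sum _ fun i _ =>
      continuous_finset_sum _ fun l _ => (hev i l).smul continuous_const
  -- A is nonempty
  have hAne : A.Nonempty := by
    refine ⟨fun i l => if h : (B i).Nonempty then (if l = (B i).min' h then 1 else 0) else 0,
      ?_, ?_, ?_, ?_⟩
    · intro i l; dsimp only; split_ifs <;> norm_num
    · intro i l; dsimp only; split_ifs <;> norm_num
    · intro i l hl
      dsimp only
      split_ifs with h h'
      · exact absurd (h' ▸ (B i).min'_mem h) hl
      · rfl
      · rfl
    · intro i h
      dsimp only
      simp only [dif_pos h]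
      rw [Finset.sum_ite_eq' (B i) ((B i).min' h) (fun _ => (1 : ℝ))]
      simp [(B i).min'_mem h]
  -- A is closed
  have hAclosed : IsClosed A := by
    have h1 : IsClosed {α : Fin m → ℕ → ℝ | ∀ i l, 0 ≤ α i l} := by
      simp only [Set.setOf_forall]
      exact isClosed_iInter fun i => isClosed_iInter fun l =>
        isClosed_le continuous_const (hev i l)
    have h2 : IsClosed {α : Fin m → ℕ → ℝ | ∀ i l, α i l ≤ 1} := by
      simp only [Set.setOf_forall]
      exact isClosed_iInter fun i => isClosed_iInter fun l =>
        isClosed_le (hev i l) continuous_const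
    have h3 : IsClosed {α : Fin m → ℕ → ℝ | ∀ i l, l ∉ B i → α i l = 0} := by
      simp only [Set.setOf_forall]
      exact isClosed_iInter fun i => isClosed_iInter fun l => isClosed_iInter fun _ =>
        isClosed_eq (hev i l) continuous_const
    have h4 : IsClosed {α : Fin m → ℕ → ℝ | ∀ i, (B i).Nonempty → ∑ l ∈ B i, α i l = 1} := by
      simp only [Set.setOf_forall]
      exact isClosed_iInter fun i => isClosed_iInter fun _ =>
        isClosed_eq (continuous_finset_sum _ fun l _ => hev i l) continuous_const
    have : A = {α : Fin m → ℕ → ℝ | ∀ i l, 0 ≤ α i l} ∩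
        ({α | ∀ i l, α i l ≤ 1} ∩ ({α | ∀ i l, l ∉ B i → α i l = 0} ∩
          {α | ∀ i, (B i).Nonempty → ∑ l ∈ B i, α i l = 1})) := by
      rw [hA]; ext α
      simp only [Set.mem_setOf_eq, Set.mem_inter_iff]
      try tauto
    rw [this]
    exact h1.inter (h2.inter (h3.inter h4))
  -- A is compact
  have hAcompact : IsCompact A := by
    have hbox : IsCompact {α : Fin m → ℕ → ℝ | ∀ i l, α i l ∈ Set.Icc (0:ℝ) 1} := by
      have : {α : Fin m → ℕ → ℝ | ∀ i l, α i l ∈ Set.Icc (0:ℝ) 1} =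
          Set.univ.pi (fun _ : Fin m => Set.univ.pi fun _ : ℕ => Set.Icc (0:ℝ) 1) := by
        ext α
        simp only [Set.mem_setOf_eq, Set.mem_univ_pi, Set.mem_Icc]
      rw [this]
      exact isCompact_univ_pi fun _ => isCompact_univ_pi fun _ => isCompact_Icc
    exact hbox.of_isClosed_subset hAclosed fun α hα i l => ⟨hα.1 i l, hα.2.1 i l⟩
  -- A is convex
  have hAconv : Convex ℝ A := by
    intro α hα β hβ a b ha hb hab
    obtain ⟨hα1, hα2, hα3, hα4⟩ := hα
    obtain ⟨hβ1, hβ2, hβ3, hβ4⟩ := hβ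
    refine ⟨?_, ?_, ?_, ?_⟩
    · intro i l
      simp only [Pi.add_apply, Pi.smul_apply, smul_eq_mul]
      exact add_nonneg (mul_nonneg ha (hα1 i l)) (mul_nonneg hb (hβ1 i l))
    · intro i l
      simp only [Pi.add_apply, Pi.smul_apply, smul_eq_mul]
      calc a * α i l + b * β i l ≤ a * 1 + b * 1 := by
            gcongr; exacts [hα2 i l, hβ2 i l]
        _ = 1 := by rw [mul_one, mul_one, hab]
    · intro i l hl
      simp only [Pi.add_apply, Pi.smul_apply, smul_eq_mul, hα3 i l hl, hβ3 i l hl]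
      ring
    · intro i hne
      simp only [Pi.add_apply, Pi.smul_apply, smul_eq_mul]
      rw [Finset.sum_add_distrib, ← Finset.mul_sum, ← Finset.mul_sum, hα4 i hne, hβ4 i hne]
      simpa using hab
  -- D is compact, convex, nonempty
  have hDcompact : IsCompact D := hAcompact.image hΦcont
  have hDconv : Convex ℝ D := by
    rintro _ ⟨α, hα, rfl⟩ _ ⟨β, hβ, rfl⟩ a b ha hb hab
    refine ⟨a • α + b • β, hAconv hα hβ ha hb hab, ?_⟩
    rw [hΦ]
    simp only [Pi.add_apply, Pi.smul_apply, smul_eq_mul]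
    rw [Finset.smul_sum, Finset.smul_sum, ← Finset.sum_add_distrib]
    refine Finset.sum_congr rfl fun i _ => ?_
    rw [Finset.smul_sum, Finset.smul_sum, ← Finset.sum_add_distrib]
    refine Finset.sum_congr rfl fun l _ => ?_
    rw [add_smul, smul_smul, smul_smul]
  have hDne : D.Nonempty := hAne.image Φ
  -- N is a closed convex cone containing 0
  have hNclosed : IsClosed N := by
    have : N = ⋂ y ∈ X, {w : EuclideanSpace ℝ (Fin n) | ⟪w, y - xnext⟫ ≤ 0} := by
      ext w; simp [hN]
    rw [this]
    exact isClosed_biInter fun y _ =>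
      isClosed_le (continuous_id.inner continuous_const) continuous_const
  have hNconv : Convex ℝ N := by
    intro w1 hw1 w2 hw2 a b ha hb hab
    intro y hy
    rw [inner_add_left, real_inner_smul_left, real_inner_smul_left]
    have := hw1 y hy; have := hw2 y hy
    nlinarith
  have hN0 : (0 : EuclideanSpace ℝ (Fin n)) ∈ N := by
    intro y hy; rw [inner_zero_left]
  have hNcone : ∀ w ∈ N, ∀ t : ℝ, 0 ≤ t → t • w ∈ N := by
    intro w hw t ht y hy
    rw [real_inner_smul_left]
    exact mul_nonpos_of_nonneg_of_nonpos ht (hw y hy)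
  -- S is convex and contains 0
  have hSconv : Convex ℝ S := by
    have : S = (fun y => -xnext + y) '' X := by
      rw [hS]; ext z; simp [sub_eq_neg_add]
    rw [this]
    exact hXconvex.translate _
  have hS0 : (0 : EuclideanSpace ℝ (Fin n)) ∈ S := ⟨xnext, hxnextX, sub_self xnext⟩
  -- Q is continuous
  have hQcont : Continuous Q := by
    rw [hQ]
    refine continuous_finset_sum _ fun i _ => ?_
    rw [hQi]
    by_cases h : (B i).Nonempty
    · simp only [dif_pos h]
      exact Continuous.finset_sup'_apply h fun l _ => continuous_const.inner continuous_id
    · simp only [dif_neg h]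
      exact continuous_const
  -- Q is positively homogeneous
  have hQhom : ∀ (c : ℝ), 0 ≤ c → ∀ z, Q (c • z) = c * Q z := by
    intro c hc z
    rw [hQ]
    simp only
    rw [Finset.mul_sum]
    refine Finset.sum_congr rfl fun i _ => ?_
    rw [hQi]
    by_cases h : (B i).Nonempty
    · simp only [dif_pos h]
      rw [Finset.comp_sup'_eq_sup'_comp h _ (fun a b => mul_max_of_nonneg a b hc)]
      refine Finset.sup'_congr h rfl fun l _ => ?_
      simp only [Function.comp_apply, real_inner_smul_right]
    · simp [dif_neg h]
  -- Key inequality from optimality: for z ∈ S, ⟪v, z⟫ ≤ Q z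
  have hkey : ∀ y ∈ X, ⟪v, y - xnext⟫ ≤ Q (y - xnext) := by
    intro y hy
    set z := y - xnext with hz
    have hstep : ∀ ε : ℝ, 0 < ε → ε ≤ 1 →
        0 ≤ Q z + (1/tk) * ⟪xnext - x k, z⟫ + ε * (‖z‖^2 / (2*tk)) := by
      intro ε hε hε1
      have hzX : xnext + ε • z ∈ X := by
        have h := hXconvex hxnextX hy (by linarith : (0:ℝ) ≤ 1 - ε) hε.le (by ring)
        have : (1 - ε) • xnext + ε • y = xnext + ε • z := by
          rw [hz]; rw [smul_sub, sub_smul, one_smul]; abel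
        rwa [this] at h
      have h1 := hmin _ hzX
      -- bound each model term
      have hsup : ∀ i : Fin m,
          (if hne : (B i).Nonempty then
            (B i).sup' hne
              (fun l => f i (x (k - l)) + ⟪g i (k - l), (xnext + ε • z) - x (k - l)⟫)
          else 0)
          ≤ (if hne : (B i).Nonempty then
            (B i).sup' hne
              (fun l => f i (x (k - l)) + ⟪g i (k - l), xnext - x (k - l)⟫)
          else 0) + ε * Qi i z := by
        intro i
        rw [hQi]
        by_cases h : (B i).Nonempty
        · simp only [dif_pos h]
          apply Finset.sup'_le
          intro l hl
          have e1 : (xnext + ε • z) - x (k - l) = (xnext - x (k - l)) + ε • z := by abel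
          rw [e1, inner_add_right, real_inner_smul_right]
          have h2 := Finset.le_sup'
            (fun l => f i (x (k - l)) + ⟪g i (k - l), xnext - x (k - l)⟫) hl
          have h3 := Finset.le_sup' (fun l => ⟪g i (k - l), z⟫) hl
          have h4 := mul_le_mul_of_nonneg_left h3 hε.le
          linarith
        · simp [dif_neg h]
      have hsum : (∑ i : Fin m,
          if hne : (B i).Nonempty then
            (B i).sup' hne
              (fun l => f i (x (k - l)) + ⟪g i (k - l), (xnext + ε • z) - x (k - l)⟫)
          else 0)
          ≤ (∑ i : Fin m,
          if hne : (B i).Nonempty then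
            (B i).sup' hne
              (fun l => f i (x (k - l)) + ⟪g i (k - l), xnext - x (k - l)⟫)
          else 0) + ε * Q z := by
        calc _ ≤ ∑ i : Fin m, ((if hne : (B i).Nonempty then
                (B i).sup' hne
                  (fun l => f i (x (k - l)) + ⟪g i (k - l), xnext - x (k - l)⟫)
              else 0) + ε * Qi i z) := Finset.sum_le_sum fun i _ => hsup i
          _ = _ := by
              rw [Finset.sum_add_distrib, ← Finset.mul_sum, hQ]
      have hnorm : ‖(xnext + ε • z) - x k‖^2
          = ‖xnext - x k‖^2 + ε * (2 * ⟪xnext - x k, z⟫) + ε^2 * ‖z‖^2 := by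
        have e1 : (xnext + ε • z) - x k = (xnext - x k) + ε • z := by abel
        rw [e1, norm_add_sq_real, real_inner_smul_right, norm_smul]
        rw [Real.norm_eq_abs, abs_of_pos hε, mul_pow]
        ring
      have hcomb : 0 ≤ ε * Q z
          + (1/(2*tk)) * (ε * (2 * ⟪xnext - x k, z⟫) + ε^2 * ‖z‖^2) := by
        have h5 : (1:ℝ)/(2*tk) * ‖(xnext + ε • z) - x k‖^2
            = 1/(2*tk) * ‖xnext - x k‖^2
              + (1/(2*tk)) * (ε * (2 * ⟪xnext - x k, z⟫) + ε^2 * ‖z‖^2) := by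
          rw [hnorm]; ring
        nlinarith [h1, hsum]
      have hεmul : ε * (Q z + (1/tk) * ⟪xnext - x k, z⟫ + ε * (‖z‖^2 / (2*tk)))
          = ε * Q z + (1/(2*tk)) * (ε * (2 * ⟪xnext - x k, z⟫) + ε^2 * ‖z‖^2) := by
        field_simp
        ring
      have h0 : ε * 0 ≤ ε * (Q z + (1/tk) * ⟪xnext - x k, z⟫ + ε * (‖z‖^2 / (2*tk))) := by
        rw [mul_zero, hεmul]; exact hcomb
      exact le_of_mul_le_mul_left h0 hε
    -- take ε → 0
    have hlim : 0 ≤ Q z + (1/tk) * ⟪xnext - x k, z⟫ := by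
      by_contra hc
      push_neg at hc
      set R := Q z + (1/tk) * ⟪xnext - x k, z⟫ with hR
      set c2 := ‖z‖^2 / (2*tk) with hc2
      have hc2nn : 0 ≤ c2 := by rw [hc2]; positivity
      have hRneg : R < 0 := hc
      set ε := min 1 (-R / (2*c2 + 2)) with hε
      have hεpos : 0 < ε := by
        rw [hε]
        apply lt_min one_pos
        apply div_pos (by linarith) (by linarith)
      have hεle1 : ε ≤ 1 := min_le_left _ _
      have h6 := hstep ε hεpos hεle1
      have h7 : ε * (2*c2 + 2) ≤ -R := by
        calc ε * (2*c2 + 2) ≤ (-R / (2*c2 + 2)) * (2*c2 + 2) :=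
              mul_le_mul_of_nonneg_right (min_le_right _ _) (by linarith)
          _ = -R := div_mul_cancel₀ _ (by linarith)
      nlinarith
    -- conclude
    have hv1 : ⟪v, z⟫ = (1/tk) * ⟪x k - xnext, z⟫ := by
      rw [hv, real_inner_smul_left]
    have hv2 : ⟪x k - xnext, z⟫ = -⟪xnext - x k, z⟫ := by
      rw [← inner_neg_left, neg_sub]
    rw [hv1, hv2]
    linarith [hlim]
  -- the closed convex cone generated by S
  set K : ConvexCone ℝ (EuclideanSpace ℝ (Fin n)) := (hSconv.toCone S).closure with hK
  have hKcoe : (K : Set (EuclideanSpace ℝ (Fin n)))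
      = closure ((hSconv.toCone S : ConvexCone ℝ _) : Set (EuclideanSpace ℝ (Fin n))) := rfl
  have hKne : (K : Set (EuclideanSpace ℝ (Fin n))).Nonempty :=
    ⟨0, subset_closure (hSconv.subset_toCone hS0)⟩
  have hKclosed : IsClosed (K : Set (EuclideanSpace ℝ (Fin n))) := isClosed_closure
  -- points of K satisfy ⟪v, ·⟫ ≤ Q
  have hKmem : ∀ d ∈ (K : Set (EuclideanSpace ℝ (Fin n))), ⟪v, d⟫ ≤ Q d := by
    have hG : IsClosed {z : EuclideanSpace ℝ (Fin n) | ⟪v, z⟫ ≤ Q z} :=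
      isClosed_le (continuous_const.inner continuous_id) hQcont
    have hsub : ((hSconv.toCone S : ConvexCone ℝ _) : Set (EuclideanSpace ℝ (Fin n)))
        ⊆ {z | ⟪v, z⟫ ≤ Q z} := by
      intro w hw
      rw [SetLike.mem_coe, Convex.mem_toCone] at hw
      obtain ⟨c, hc, zz, hzzS, rfl⟩ := hw
      obtain ⟨y, hy, rfl⟩ := hzzS
      simp only [Set.mem_setOf_eq]
      rw [real_inner_smul_right, hQhom c hc.le]
      exact mul_le_mul_of_nonneg_left (hkey y hy) hc.le
    intro d hd
    exact closure_minimal hsub hG hd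
  -- membership in N is equivalent to being in the (negated) dual of K
  have hNK : ∀ w, w ∈ N ↔ ∀ z ∈ (K : Set (EuclideanSpace ℝ (Fin n))), ⟪w, z⟫ ≤ 0 := by
    intro w
    constructor
    · intro hw
      have hG : IsClosed {z : EuclideanSpace ℝ (Fin n) | ⟪w, z⟫ ≤ 0} :=
        isClosed_le (continuous_const.inner continuous_id) continuous_const
      have hsub : ((hSconv.toCone S : ConvexCone ℝ _) : Set (EuclideanSpace ℝ (Fin n)))
          ⊆ {z | ⟪w, z⟫ ≤ 0} := by
        intro z hz
        rw [SetLike.mem_coe, Convex.mem_toCone] at hz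
        obtain ⟨c, hc, zz, hzzS, rfl⟩ := hz
        obtain ⟨y, hy, rfl⟩ := hzzS
        simp only [Set.mem_setOf_eq]
        rw [real_inner_smul_right]
        exact mul_nonpos_of_nonneg_of_nonpos hc.le (hw y hy)
      intro z hz
      exact closure_minimal hsub hG hz
    · intro hw y hy
      exact hw _ (subset_closure (hSconv.subset_toCone ⟨y, hy, rfl⟩))
  -- main separation argument: v ∈ D + N
  have hvDN : v ∈ D + N := by
    by_contra hvE
    have hEconv : Convex ℝ (D + N) := hDconv.add hNconv
    have hEclosed : IsClosed (D + N) := hNclosed.add_left_of_isCompact hDcompact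
    obtain ⟨fl, u, hfl, hflv⟩ := geometric_hahn_banach_closed_point hEconv hEclosed hvE
    set d := (InnerProductSpace.toDual ℝ (EuclideanSpace ℝ (Fin n))).symm fl with hd
    have hfld : ∀ z, ⟪d, z⟫ = fl z := fun z => InnerProductSpace.toDual_symm_apply
    obtain ⟨s0, hs0D⟩ := hDne
    have hs0E : s0 ∈ D + N := ⟨s0, hs0D, 0, hN0, add_zero s0⟩
    have hus0 : fl s0 < u := hfl s0 hs0E
    -- Step A: d pairs nonpositively with N
    have hdN : ∀ w ∈ N, ⟪d, w⟫ ≤ 0 := by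
      intro w hw
      by_contra hpos
      push_neg at hpos
      set t := (u - fl s0) / ⟪d, w⟫ with ht
      have htpos : 0 < t := div_pos (by linarith) hpos
      have hmem : s0 + t • w ∈ D + N := Set.add_mem_add hs0D (hNcone w hw t htpos.le)
      have hlt := hfl _ hmem
      rw [map_add, map_smul, smul_eq_mul, ← hfld w] at hlt
      rw [ht, div_mul_cancel₀ _ (ne_of_gt hpos)] at hlt
      linarith
    -- hence d ∈ K by the bipolar theorem
    have hdK : d ∈ (K : Set (EuclideanSpace ℝ (Fin n))) := by
      by_contra hdnK
      obtain ⟨f2, u2, hf2K, hf2d⟩ := geometric_hahn_banach_closed_point K.convex hKclosed hdnK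
      have h0K : (0 : EuclideanSpace ℝ (Fin n)) ∈ (K : Set (EuclideanSpace ℝ (Fin n))) :=
        subset_closure (hSconv.subset_toCone hS0)
      have hu2 : 0 < u2 := by have := hf2K 0 h0K; simpa using this
      have hf2le : ∀ z ∈ (K : Set (EuclideanSpace ℝ (Fin n))), f2 z ≤ 0 := by
        intro z hz; by_contra hpos; push_neg at hpos
        have hmem : (u2 / f2 z) • z ∈ (K : Set (EuclideanSpace ℝ (Fin n))) :=
          K.smul_mem (div_pos hu2 hpos) hz
        have := hf2K _ hmem
        rw [map_smul, smul_eq_mul, div_mul_cancel₀ _ (ne_of_gt hpos)] at this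
        exact lt_irrefl _ this
      set e := (InnerProductSpace.toDual ℝ (EuclideanSpace ℝ (Fin n))).symm f2 with he
      have hfe : ∀ z, ⟪e, z⟫ = f2 z := fun z => InnerProductSpace.toDual_symm_apply
      have heN : e ∈ N := (hNK e).2 fun z hz => by rw [hfe]; exact hf2le z hz
      have := hdN e heN
      rw [real_inner_comm, hfe] at this
      linarith
    -- construct the maximizing vertex s* ∈ D
    have hsel : ∀ i : Fin m, ∃ li : ℕ,
        (B i).Nonempty → li ∈ B i ∧ Qi i d = ⟪g i (k - li), d⟫ := by
      intro i
      by_cases h : (B i).Nonempty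
      · obtain ⟨l, hl, hsupeq⟩ := Finset.exists_mem_eq_sup' h (fun l => ⟪g i (k - l), d⟫)
        refine ⟨l, fun _ => ⟨hl, ?_⟩⟩
        rw [hQi]; simp only [dif_pos h]; exact hsupeq
      · exact ⟨0, fun h' => absurd h' h⟩
    choose li hli using hsel
    set αs : Fin m → ℕ → ℝ :=
      fun i l => if (B i).Nonempty ∧ l = li i then 1 else 0 with hαs
    have hαsA : αs ∈ A := by
      refine ⟨?_, ?_, ?_, ?_⟩
      · intro i l; rw [hαs]; dsimp only; split_ifs <;> norm_num
      · intro i l; rw [hαs]; dsimp only; split_ifs <;> norm_num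
      · intro i l hl
        rw [hαs]
        dsimp only
        split_ifs with hcond
        · exact absurd (hcond.2 ▸ (hli i hcond.1).1) hl
        · rfl
      · intro i hne
        rw [hαs]
        dsimp only
        simp only [hne, true_and]
        rw [Finset.sum_ite_eq' (B i) (li i) (fun _ => (1:ℝ))]
        simp [(hli i hne).1]
    have hΦαs : Φ αs = ∑ i : Fin m, (if (B i).Nonempty then g i (k - li i) else 0) := by
      rw [hΦ]
      refine Finset.sum_congr rfl fun i _ => ?_
      by_cases h : (B i).Nonempty
      · simp only [hαs, h, true_and, if_pos, ite_smul, one_smul, zero_smul]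
        rw [Finset.sum_ite_eq' (B i) (li i) (fun l => g i (k - l))]
        simp [(hli i h).1, h]
      · simp [hαs, h, Finset.not_nonempty_iff_eq_empty.mp h]
    have hQd : ⟪Φ αs, d⟫ = Q d := by
      rw [hΦαs, sum_inner, hQ]
      refine Finset.sum_congr rfl fun i _ => ?_
      by_cases h : (B i).Nonempty
      · rw [if_pos h, (hli i h).2]
      · rw [if_neg h, inner_zero_left, hQi]
        simp [dif_neg h]
    have hΦαsE : Φ αs ∈ D + N := ⟨Φ αs, ⟨αs, hαsA, rfl⟩, 0, hN0, add_zero _⟩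
    have hltu := hfl _ hΦαsE
    have hvQ : ⟪v, d⟫ ≤ Q d := hKmem d hdK
    rw [← hfld] at hltu hflv
    rw [real_inner_comm] at hltu
    rw [hQd] at hltu
    rw [real_inner_comm v d] at hflv
    linarith
  -- extract the weights and finish via the projection characterization
  obtain ⟨s, hsD, w, hwN, hsw⟩ := Set.mem_add.mp hvDN
  obtain ⟨α, hαA, hαs⟩ := hsD
  refine ⟨α, hαA.1, hαA.2.2.2, ?_⟩
  have hsumeq : (∑ i : Fin m, ∑ l ∈ B i, α i l • g i (k - l)) = s := by
    rw [← hαs, hΦ]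
  rw [hsumeq]
  set uvec := x k - tk • s with huvec
  -- variational inequality for xnext
  have hVI : ∀ y ∈ X, ⟪uvec - xnext, y - xnext⟫ ≤ 0 := by
    intro y hy
    have h1 : uvec - xnext = tk • (v - s) := by
      rw [huvec, hv, smul_sub, smul_smul, mul_one_div_cancel (ne_of_gt htk), one_smul]
      abel
    have h2 : v - s = w := by rw [← hsw]; abel
    rw [h1, h2, real_inner_smul_left]
    exact mul_nonpos_of_nonneg_of_nonpos htk.le (hwN y hy)
  obtain ⟨hPX, hPle⟩ := hP uvec
  have hle := hPle xnext hxnextX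
  have hexp : ‖uvec - P uvec‖^2
      = ‖uvec - xnext‖^2 + 2 * ⟪uvec - xnext, xnext - P uvec⟫ + ‖xnext - P uvec‖^2 := by
    rw [show uvec - P uvec = (uvec - xnext) + (xnext - P uvec) by abel, norm_add_sq_real]
  have hinner : 0 ≤ ⟪uvec - xnext, xnext - P uvec⟫ := by
    have h3 := hVI (P uvec) hPX
    rw [show xnext - P uvec = -(P uvec - xnext) by abel, inner_neg_right]
    linarith
  have hsq : ‖uvec - P uvec‖^2 ≤ ‖uvec - xnext‖^2 :=
    pow_le_pow_left₀ (norm_nonneg _) hle 2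
  have hz0 : ‖xnext - P uvec‖^2 ≤ 0 := by linarith
  have hz1 : ‖xnext - P uvec‖ = 0 := by
    nlinarith [norm_nonneg (xnext - P uvec)]
  have hz2 : xnext - P uvec = 0 := norm_eq_zero.mp hz1
  exact sub_eq_zero.mp hz2
end

section
/- (Fundamental inequality.) For any y ∈ X and any k ≥ 0 such that B_{k,i} ≠ ∅ for every i = 1,…,m, the iterates satisfy ‖x_{k+1} − y‖² ≤ ‖x_k − y‖² − 2 t_k ( f(x_k) − f(y) ) + 4 t_k t̄_{k−W,k−1} m² C² W + t_k² m² C², where f = Σ_{i=1}^m f_i, t̄_{k−W,k−1} = max{t_{k−W}, t_{k−W+1}, …, t_{k−1}}, and t_i = t_0 for i < 0 by convention. -/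
open RealInnerProductSpace

private lemma proj_nonexpansive {n : ℕ} {X : Set (EuclideanSpace ℝ (Fin n))}
    (hXconvex : Convex ℝ X)
    (P : EuclideanSpace ℝ (Fin n) → EuclideanSpace ℝ (Fin n))
    (hP : ∀ u, P u ∈ X ∧ ∀ y ∈ X, ‖u - P u‖ ≤ ‖u - y‖)
    (u y : EuclideanSpace ℝ (Fin n)) (hy : y ∈ X) : ‖P u - y‖ ≤ ‖u - y‖ := by
  obtain ⟨hpX, hmin⟩ := hP u
  have key : ⟪u - P u, y - P u⟫ ≤ 0 := by
    by_contra hcon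
    push_neg at hcon
    have hyp : y - P u ≠ 0 := by
      intro h; rw [h, inner_zero_right] at hcon; exact lt_irrefl 0 hcon
    have hyp' : 0 < ‖y - P u‖ := norm_pos_iff.mpr hyp
    have hb : (0:ℝ) < ‖y - P u‖ ^ 2 := by positivity
    set a : ℝ := ⟪u - P u, y - P u⟫ with ha
    set b : ℝ := ‖y - P u‖ ^ 2 with hbdef
    set θ : ℝ := min 1 (a / b) with hθ
    have hθ0 : 0 < θ := lt_min one_pos (div_pos hcon hb)
    have hθ1 : θ ≤ 1 := min_le_left _ _
    have hz : (1 - θ) • P u + θ • y ∈ X :=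
      hXconvex hpX hy (by linarith) hθ0.le (by ring)
    have h2 := hmin _ hz
    have hrw : u - ((1 - θ) • P u + θ • y) = (u - P u) - θ • (y - P u) := by
      module
    have hexp : ‖u - ((1 - θ) • P u + θ • y)‖ ^ 2
        = ‖u - P u‖ ^ 2 - 2 * (θ * a) + θ ^ 2 * b := by
      rw [hrw, norm_sub_sq_real, real_inner_smul_right, norm_smul, mul_pow,
        Real.norm_eq_abs, sq_abs, hbdef]
    have h3 : ‖u - P u‖ ^ 2 ≤ ‖u - ((1 - θ) • P u + θ • y)‖ ^ 2 :=
      pow_le_pow_left₀ (norm_nonneg _) h2 2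
    rw [hexp] at h3
    have h4 : 2 * a ≤ θ * b := by
      have h3' : θ * (2 * a) ≤ θ * (θ * b) := by nlinarith
      exact le_of_mul_le_mul_left h3' hθ0
    have h5 : θ * b ≤ a := by
      have hmin' : θ ≤ a / b := min_le_right _ _
      calc θ * b ≤ (a / b) * b := mul_le_mul_of_nonneg_right hmin' hb.le
        _ = a := by field_simp
    linarith
  have hsq : ‖u - y‖ ^ 2 = ‖u - P u‖ ^ 2 - 2 * ⟪u - P u, y - P u⟫ + ‖P u - y‖ ^ 2 := by
    have h : u - y = (u - P u) - (y - P u) := by abel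
    rw [h, norm_sub_sq_real, norm_sub_rev y]
  have hle : ‖P u - y‖ ^ 2 ≤ ‖u - y‖ ^ 2 := by nlinarith [sq_nonneg ‖u - P u‖]
  have := Real.sqrt_le_sqrt hle
  rwa [Real.sqrt_sq (norm_nonneg _), Real.sqrt_sq (norm_nonneg _)] at this

private lemma exists_subgradient {n : ℕ} (f : EuclideanSpace ℝ (Fin n) → ℝ)
    (hf : ConvexOn ℝ Set.univ f) (z : EuclideanSpace ℝ (Fin n)) :
    ∃ g : EuclideanSpace ℝ (Fin n), ∀ y, f z + ⟪g, y - z⟫ ≤ f y := by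
  have hcont : Continuous f := continuousOn_univ.mp
    (hf.continuousOn isOpen_univ)
  set S : Set ((EuclideanSpace ℝ (Fin n)) × ℝ) := {p | f p.1 < p.2} with hS
  have hSopen : IsOpen S :=
    isOpen_lt (by fun_prop : Continuous fun p : (EuclideanSpace ℝ (Fin n)) × ℝ => f p.1)
      continuous_snd
  have hSconv : Convex ℝ S := by
    intro p hp q hq a b ha hb hab
    simp only [hS, Set.mem_setOf_eq] at hp hq ⊢
    have h1 : f (a • p.1 + b • q.1) ≤ a * f p.1 + b * f q.1 := by
      simpa [smul_eq_mul] using hf.2 (Set.mem_univ p.1) (Set.mem_univ q.1) ha hb hab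
    have h2 : a * f p.1 + b * f q.1 < a * p.2 + b * q.2 := by
      rcases eq_or_lt_of_le ha with h | h
      · have hb1 : b = 1 := by linarith
        rw [← h, hb1]; simpa using hq
      · nlinarith [mul_le_mul_of_nonneg_left hq.le hb]
    show f (a • p + b • q).1 < (a • p + b • q).2
    simpa using lt_of_le_of_lt h1 h2
  have hznot : ((z, f z) : (EuclideanSpace ℝ (Fin n)) × ℝ) ∉ S := by simp [hS]
  obtain ⟨φ, hφ⟩ := geometric_hahn_banach_point_open hSconv hSopen hznot
  set c : ℝ := φ (0, 1) with hc
  have hsplit : ∀ (v : EuclideanSpace ℝ (Fin n)) (s : ℝ), φ (v, s) = φ (v, 0) + s * c := by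
    intro v s
    have h : ((v, s) : (EuclideanSpace ℝ (Fin n)) × ℝ) = (v, 0) + s • ((0 : EuclideanSpace ℝ (Fin n)), (1:ℝ)) := by
      simp [Prod.ext_iff]
    rw [h, map_add, map_smul, smul_eq_mul]
  have hcpos : 0 < c := by
    have h1 : φ (z, f z) < φ (z, f z + 1) := hφ _ (by simp [hS])
    rw [hsplit z (f z), hsplit z (f z + 1)] at h1
    nlinarith
  have hkey : ∀ w, φ (z, 0) + f z * c ≤ φ (w, 0) + f w * c := by
    intro w
    by_contra hcon
    push_neg at hcon
    set ε : ℝ := (φ (z,0) + f z * c - (φ (w,0) + f w * c)) / c with hε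
    have hεpos : 0 < ε := div_pos (by linarith) hcpos
    have h2 : φ (z, f z) < φ (w, f w + ε) := hφ _ (by simp [hS]; linarith)
    rw [hsplit z (f z), hsplit w (f w + ε)] at h2
    have hεc : ε * c = φ (z,0) + f z * c - (φ (w,0) + f w * c) := by
      rw [hε, div_mul_cancel₀]; exact ne_of_gt hcpos
    nlinarith
  have hc' : c ≠ 0 := ne_of_gt hcpos
  refine ⟨(-(1/c)) • (InnerProductSpace.toDual ℝ _).symm
    (φ.comp (ContinuousLinearMap.inl ℝ (EuclideanSpace ℝ (Fin n)) ℝ)), fun w => ?_⟩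
  have hvip : ∀ w : EuclideanSpace ℝ (Fin n),
      ⟪(InnerProductSpace.toDual ℝ _).symm
        (φ.comp (ContinuousLinearMap.inl ℝ (EuclideanSpace ℝ (Fin n)) ℝ)), w⟫ = φ (w, 0) := by
    intro w
    rw [InnerProductSpace.toDual_symm_apply]
    simp
  have h3 := hkey w
  have hip : ⟪(-(1/c)) • (InnerProductSpace.toDual ℝ _).symm
      (φ.comp (ContinuousLinearMap.inl ℝ (EuclideanSpace ℝ (Fin n)) ℝ)), w - z⟫
      = -(1/c) * (φ (w,0) - φ (z,0)) := by
    rw [real_inner_smul_left, inner_sub_right, hvip, hvip]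
  rw [hip]
  have h4 : f z * c - (φ (w,0) - φ (z,0)) ≤ f w * c := by linarith
  calc f z + -(1/c) * (φ (w,0) - φ (z,0))
      = (f z * c - (φ (w,0) - φ (z,0))) / c := by field_simp; ring
    _ ≤ (f w * c) / c := (div_le_div_iff_of_pos_right hcpos).mpr h4
    _ = f w := by field_simp


/-- (Fundamental inequality.) For any `y ∈ X` and any `k ≥ 0`
with `B k i ≠ ∅` for all `i`,
`‖x (k+1) - y‖² ≤ ‖x k - y‖² - 2 t k (f (x k) - f y) + 4 t k t̄ m² C² W + t k² m² C²`,
where `t̄ = max{t (k-W), …, t (k-1)}` with the convention `t i = t 0` for `i < 0`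
(realized by truncated subtraction on `ℕ`). -/
theorem incremental_cp_fundamental_inequality
    (n m W : ℕ) (hW : 1 ≤ W)
    (X : Set (EuclideanSpace ℝ (Fin n)))
    (hXne : X.Nonempty) (hXclosed : IsClosed X) (hXconvex : Convex ℝ X)
    (f : Fin m → EuclideanSpace ℝ (Fin n) → ℝ)
    (hfconv : ∀ i, ConvexOn ℝ Set.univ (f i))
    (C : ℝ) (hC : 0 < C)
    -- every subgradient of any `f i` at any point of `X` has norm at most `C`
    (hCbound : ∀ i, ∀ z ∈ X, ∀ g : EuclideanSpace ℝ (Fin n),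
      (∀ y, f i z + ⟪g, y - z⟫ ≤ f i y) → ‖g‖ ≤ C)
    -- `P` is the Euclidean projection onto `X`
    (P : EuclideanSpace ℝ (Fin n) → EuclideanSpace ℝ (Fin n))
    (hP : ∀ u, P u ∈ X ∧ ∀ y ∈ X, ‖u - P u‖ ≤ ‖u - y‖)
    -- positive step sizes
    (t : ℕ → ℝ) (ht : ∀ k, 0 < t k)
    -- the iterates, lying in `X`
    (x : ℕ → EuclideanSpace ℝ (Fin n)) (hx : ∀ k, x k ∈ X)
    -- the index sets `B k i ⊆ {0, …, min k (W-1)}`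
    (B : ℕ → Fin m → Finset ℕ)
    (hB : ∀ k i, ∀ l ∈ B k i, l ≤ min k (W - 1))
    -- `g i j` is a subgradient of `f i` at `x j` (used for `j = k - l`, `l ∈ B k i`)
    (g : Fin m → ℕ → EuclideanSpace ℝ (Fin n))
    (hg : ∀ k i, ∀ l ∈ B k i, ∀ y,
      f i (x (k - l)) + ⟪g i (k - l), y - x (k - l)⟫ ≤ f i y)
    -- convex weights
    (α : ℕ → Fin m → ℕ → ℝ)
    (hα0 : ∀ k i l, 0 ≤ α k i l)
    (hα1 : ∀ k i, (B k i).Nonempty → ∑ l ∈ B k i, α k i l = 1)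
    (hα2 : ∀ k i, B k i = ∅ → ∀ l, α k i l = 0)
    -- the update rule
    (hupdate : ∀ k, x (k + 1) =
      P (x k - t k • ∑ i : Fin m, ∑ l ∈ B k i, α k i l • g i (k - l)))
    (k : ℕ) (hk : ∀ i, (B k i).Nonempty)
    (y : EuclideanSpace ℝ (Fin n)) (hy : y ∈ X) :
    ‖x (k + 1) - y‖ ^ 2 ≤
      ‖x k - y‖ ^ 2 -
          2 * t k * ((∑ i : Fin m, f i (x k)) - ∑ i : Fin m, f i y) +
        4 * t k *
            ((Finset.Icc (k - W) (k - 1)).sup'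
              (Finset.nonempty_Icc.mpr (by omega)) t) *
            (m : ℝ) ^ 2 * C ^ 2 * (W : ℝ) +
        (t k) ^ 2 * (m : ℝ) ^ 2 * C ^ 2 := by
  set T : ℝ := (Finset.Icc (k - W) (k - 1)).sup'
      (Finset.nonempty_Icc.mpr (by omega)) t with hT
  set d : EuclideanSpace ℝ (Fin n) :=
    ∑ i : Fin m, ∑ l ∈ B k i, α k i l • g i (k - l) with hd
  have hmC : (0:ℝ) ≤ (m:ℝ) * C := by positivity
  have hTpos : 0 < T := by
    have hmem : k - 1 ∈ Finset.Icc (k - W) (k - 1) :=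
      Finset.mem_Icc.mpr ⟨by omega, le_rfl⟩
    exact lt_of_lt_of_le (ht (k-1)) (Finset.le_sup' t hmem)
  set D : ℝ := (W : ℝ) * (T * ((m:ℝ) * C)) with hD
  have hD0 : 0 ≤ D := by positivity
  -- subgradient norms
  have hgnorm : ∀ (k' : ℕ) (i : Fin m), ∀ l ∈ B k' i, ‖g i (k' - l)‖ ≤ C := by
    intro k' i l hl
    exact hCbound i (x (k' - l)) (hx _) _ (hg k' i l hl)
  -- norm of the update direction at every step
  have hdnorm : ∀ k' : ℕ,
      ‖∑ i : Fin m, ∑ l ∈ B k' i, α k' i l • g i (k' - l)‖ ≤ (m:ℝ) * C := by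
    intro k'
    calc ‖∑ i : Fin m, ∑ l ∈ B k' i, α k' i l • g i (k' - l)‖
        ≤ ∑ i : Fin m, ‖∑ l ∈ B k' i, α k' i l • g i (k' - l)‖ := norm_sum_le _ _
      _ ≤ ∑ _i : Fin m, C := by
          apply Finset.sum_le_sum
          intro i _
          rcases Finset.eq_empty_or_nonempty (B k' i) with he | hne
          · rw [he]; simpa using hC.le
          · calc ‖∑ l ∈ B k' i, α k' i l • g i (k' - l)‖
                ≤ ∑ l ∈ B k' i, ‖α k' i l • g i (k' - l)‖ := norm_sum_le _ _
              _ ≤ ∑ l ∈ B k' i, α k' i l * C := by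
                  apply Finset.sum_le_sum
                  intro l hl
                  rw [norm_smul, Real.norm_eq_abs, abs_of_nonneg (hα0 k' i l)]
                  exact mul_le_mul_of_nonneg_left (hgnorm k' i l hl) (hα0 k' i l)
              _ = C := by rw [← Finset.sum_mul, hα1 k' i hne, one_mul]
      _ = (m:ℝ) * C := by
          simp [Finset.sum_const, Finset.card_univ, nsmul_eq_mul]
  -- one-step movement bound
  have hstep : ∀ j : ℕ, ‖x (j+1) - x j‖ ≤ t j * ((m:ℝ) * C) := by
    intro j
    rw [hupdate j]
    calc ‖P (x j - t j • ∑ i : Fin m, ∑ l ∈ B j i, α j i l • g i (j - l)) - x j‖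
        ≤ ‖(x j - t j • ∑ i : Fin m, ∑ l ∈ B j i, α j i l • g i (j - l)) - x j‖ :=
          proj_nonexpansive hXconvex P hP _ _ (hx j)
      _ = t j * ‖∑ i : Fin m, ∑ l ∈ B j i, α j i l • g i (j - l)‖ := by
          rw [sub_sub_cancel_left, norm_neg, norm_smul, Real.norm_eq_abs,
            abs_of_pos (ht j)]
      _ ≤ t j * ((m:ℝ) * C) :=
          mul_le_mul_of_nonneg_left (hdnorm j) (ht j).le
  -- distance of past iterates to the current one
  have hdist : ∀ l : ℕ, l ≤ k → l ≤ W → ‖x k - x (k - l)‖ ≤ (l:ℝ) * (T * ((m:ℝ) * C)) := by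
    intro l
    induction l with
    | zero => intro _ _; simp
    | succ l ih =>
      intro hlk hlW
      have h1 : ‖x k - x (k - l)‖ ≤ (l:ℝ) * (T * ((m:ℝ)*C)) := ih (by omega) (by omega)
      have heq : k - l = (k - (l+1)) + 1 := by omega
      have h2 : ‖x (k - l) - x (k - (l+1))‖ ≤ T * ((m:ℝ) * C) := by
        rw [heq]
        calc ‖x ((k-(l+1))+1) - x (k-(l+1))‖ ≤ t (k-(l+1)) * ((m:ℝ)*C) := hstep _
          _ ≤ T * ((m:ℝ)*C) := by
              apply mul_le_mul_of_nonneg_right _ hmC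
              exact Finset.le_sup' t (Finset.mem_Icc.mpr ⟨by omega, by omega⟩)
      calc ‖x k - x (k-(l+1))‖
          ≤ ‖x k - x (k-l)‖ + ‖x (k-l) - x (k-(l+1))‖ := by
            have h : x k - x (k-(l+1)) = (x k - x (k-l)) + (x (k-l) - x (k-(l+1))) := by
              abel
            rw [h]; exact norm_add_le _ _
        _ ≤ (l:ℝ) * (T*((m:ℝ)*C)) + T*((m:ℝ)*C) := add_le_add h1 h2
        _ = ((l+1 : ℕ):ℝ) * (T*((m:ℝ)*C)) := by push_cast; ring
  -- Lipschitz-type bound from the subgradient norm bound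
  have hlip : ∀ i : Fin m, ∀ z ∈ X, ∀ w, f i z - f i w ≤ C * ‖z - w‖ := by
    intro i z hz w
    obtain ⟨g0, hg0⟩ := exists_subgradient (f i) (hfconv i) z
    have hn : ‖g0‖ ≤ C := hCbound i z hz g0 hg0
    have h1 := hg0 w
    have hcs : |⟪g0, w - z⟫| ≤ ‖g0‖ * ‖w - z‖ := abs_real_inner_le_norm _ _
    have h2 : -⟪g0, w - z⟫ ≤ C * ‖z - w‖ := by
      rw [norm_sub_rev z w]
      nlinarith [abs_le.mp hcs, norm_nonneg (w - z), mul_le_mul_of_nonneg_right hn (norm_nonneg (w - z))]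
    linarith
  -- per-term inner product lower bound
  have hinner : ∀ i : Fin m, ∀ l ∈ B k i,
      f i (x k) - f i y - 2 * (C * D) ≤ ⟪g i (k - l), x k - y⟫ := by
    intro i l hl
    have hlk := hB k i l hl
    have hΔ : ‖x k - x (k - l)‖ ≤ D := by
      calc ‖x k - x (k-l)‖ ≤ (l:ℝ) * (T*((m:ℝ)*C)) := hdist l (by omega) (by omega)
        _ ≤ (W:ℝ) * (T*((m:ℝ)*C)) := by
            apply mul_le_mul_of_nonneg_right _ (mul_nonneg hTpos.le hmC)
            exact_mod_cast Nat.cast_le.mpr (by omega : l ≤ W)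
    have hgC : ‖g i (k - l)‖ ≤ C := hgnorm k i l hl
    have hs1 := hg k i l hl y
    have hCS : |⟪g i (k-l), x k - x (k-l)⟫| ≤ C * D := by
      calc |⟪g i (k-l), x k - x (k-l)⟫| ≤ ‖g i (k-l)‖ * ‖x k - x (k-l)‖ :=
            abs_real_inner_le_norm _ _
        _ ≤ C * D := mul_le_mul hgC hΔ (norm_nonneg _) hC.le
    have hlip' : f i (x k) - f i (x (k-l)) ≤ C * D := by
      calc f i (x k) - f i (x (k-l)) ≤ C * ‖x k - x (k-l)‖ := hlip i (x k) (hx k) _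
        _ ≤ C * D := mul_le_mul_of_nonneg_left hΔ hC.le
    have hsplit : ⟪g i (k-l), x k - y⟫
        = ⟪g i (k-l), x k - x (k-l)⟫ - ⟪g i (k-l), y - x (k-l)⟫ := by
      rw [← inner_sub_right]
      congr 1
      abel
    rw [hsplit]
    have := abs_le.mp hCS
    linarith [this.1, hs1]
  -- summed lower bound on the inner product
  have hsum : (∑ i : Fin m, f i (x k)) - (∑ i : Fin m, f i y) - (m:ℝ) * (2*(C*D))
      ≤ ⟪d, x k - y⟫ := by
    rw [hd, sum_inner]
    have hterm : ∀ i : Fin m, f i (x k) - f i y - 2*(C*D)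
        ≤ ⟪∑ l ∈ B k i, α k i l • g i (k-l), x k - y⟫ := by
      intro i
      rw [sum_inner]
      calc f i (x k) - f i y - 2*(C*D)
          = ∑ l ∈ B k i, α k i l * (f i (x k) - f i y - 2*(C*D)) := by
            rw [← Finset.sum_mul, hα1 k i (hk i), one_mul]
        _ ≤ ∑ l ∈ B k i, ⟪α k i l • g i (k-l), x k - y⟫ := by
            apply Finset.sum_le_sum
            intro l hl
            rw [real_inner_smul_left]
            exact mul_le_mul_of_nonneg_left (hinner i l hl) (hα0 k i l)
    calc (∑ i : Fin m, f i (x k)) - (∑ i : Fin m, f i y) - (m:ℝ) * (2*(C*D))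
        = ∑ i : Fin m, (f i (x k) - f i y - 2*(C*D)) := by
          rw [Finset.sum_sub_distrib, Finset.sum_sub_distrib, Finset.sum_const,
            Finset.card_univ, Fintype.card_fin, nsmul_eq_mul]
      _ ≤ ∑ i : Fin m, ⟪∑ l ∈ B k i, α k i l • g i (k-l), x k - y⟫ :=
          Finset.sum_le_sum fun i _ => hterm i
  -- assemble
  have hA : ‖x (k+1) - y‖ ≤ ‖(x k - t k • d) - y‖ := by
    rw [hupdate k]
    exact proj_nonexpansive hXconvex P hP _ _ hy
  have hA2 : ‖x (k+1) - y‖^2 ≤ ‖(x k - t k • d) - y‖^2 :=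
    pow_le_pow_left₀ (norm_nonneg _) hA 2
  have hexp : ‖(x k - t k • d) - y‖^2
      = ‖x k - y‖^2 - 2 * t k * ⟪d, x k - y⟫ + t k^2 * ‖d‖^2 := by
    have h1 : (x k - t k • d) - y = (x k - y) - t k • d := by abel
    rw [h1, norm_sub_sq_real, real_inner_smul_right, norm_smul, mul_pow,
      Real.norm_eq_abs, sq_abs, real_inner_comm]
    ring
  have hd2 : t k^2 * ‖d‖^2 ≤ t k^2 * ((m:ℝ)*C)^2 := by
    apply mul_le_mul_of_nonneg_left _ (sq_nonneg _)
    exact pow_le_pow_left₀ (norm_nonneg _) (hdnorm k) 2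
  have h5 : 2 * t k * ((∑ i : Fin m, f i (x k)) - (∑ i : Fin m, f i y) - (m:ℝ) * (2*(C*D)))
      ≤ 2 * t k * ⟪d, x k - y⟫ :=
    mul_le_mul_of_nonneg_left hsum (by nlinarith [ht k])
  calc ‖x (k+1) - y‖ ^ 2
      ≤ ‖x k - y‖^2 - 2 * t k * ⟪d, x k - y⟫ + t k^2 * ‖d‖^2 := by
        rw [← hexp]; exact hA2
    _ ≤ ‖x k - y‖^2
        - 2 * t k * ((∑ i : Fin m, f i (x k)) - (∑ i : Fin m, f i y) - (m:ℝ) * (2*(C*D)))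
        + t k^2 * ((m:ℝ)*C)^2 := by linarith
    _ = ‖x k - y‖ ^ 2 -
          2 * t k * ((∑ i : Fin m, f i (x k)) - ∑ i : Fin m, f i y) +
        4 * t k * T * (m : ℝ) ^ 2 * C ^ 2 * (W : ℝ) +
        (t k) ^ 2 * (m : ℝ) ^ 2 * C ^ 2 := by
        rw [hD]; ring
end

section
/- Suppose the step size is constant, t_k = t > 0 for all k, and suppose inf_{x ∈ X} Σ_{i=1}^m f_i(x) = −∞. Then liminf_{k→∞} f(x_k) = −∞, where f = Σ_{i=1}^m f_i; that is, the sequence {f(x_k)} has subsequences diverging to −∞. -/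
open RealInnerProductSpace

lemma exists_subgradient_aux {E : Type*} [NormedAddCommGroup E] [InnerProductSpace ℝ E]
    [FiniteDimensional ℝ E] (f : E → ℝ) (hf : ConvexOn ℝ Set.univ f) (a : E) :
    ∃ g : E, ∀ y, f a + ⟪g, y - a⟫ ≤ f y := by
  have hcont : Continuous f := by
    have h := hf.continuousOn isOpen_univ
    exact continuousOn_univ.mp h
  set S : Set (E × ℝ) := {p | f p.1 < p.2} with hS
  have hSopen : IsOpen S := isOpen_lt (hcont.comp continuous_fst) continuous_snd
  have hSconv : Convex ℝ S := by
    intro p hp q hq s t hs ht hst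
    have hfp : f p.1 < p.2 := hp
    have hfq : f q.1 < q.2 := hq
    have h1 : f (s • p.1 + t • q.1) ≤ s * f p.1 + t * f q.1 :=
      hf.2 (Set.mem_univ _) (Set.mem_univ _) hs ht hst
    have h2 : s * f p.1 + t * f q.1 < s * p.2 + t * q.2 := by
      rcases eq_or_lt_of_le hs with h | h
      · have ht1 : t = 1 := by linarith
        rw [← h, ht1]; simpa
      · nlinarith [mul_lt_mul_of_pos_left hfp h, mul_le_mul_of_nonneg_left hfq.le ht]
    exact lt_of_le_of_lt h1 h2
  have hna : (a, f a) ∉ S := by simp [hS]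
  obtain ⟨φ, hφ⟩ := geometric_hahn_banach_point_open hSconv hSopen hna
  set c : ℝ := φ (0, 1) with hc
  have hφsplit : ∀ y : E, ∀ t : ℝ, φ (y, t) = φ (y, 0) + t * c := by
    intro y t
    have h : (y, t) = (y, (0:ℝ)) + t • ((0:E), (1:ℝ)) := by simp [Prod.ext_iff]
    rw [h, map_add, map_smul]; simp [hc, smul_eq_mul]
  have hcpos : 0 < c := by
    have h1 := hφ (a, f a + 1) (by simp [hS])
    rw [hφsplit a (f a + 1), hφsplit a (f a)] at h1
    linarith
  have key : ∀ y : E, φ (a, 0) + f a * c ≤ φ (y, 0) + f y * c := by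
    intro y
    by_contra h
    push_neg at h
    set ε := (φ (a,0) + f a * c - (φ (y,0) + f y * c)) with hε
    have hεpos : 0 < ε := by linarith
    have h2 := hφ (y, f y + ε / (2 * c)) (by simp [hS]; positivity)
    rw [hφsplit a (f a), hφsplit y (f y + ε / (2 * c))] at h2
    have h3 : f y * c + ε/2 = (f y + ε / (2*c)) * c := by field_simp
    linarith
  set L : E →L[ℝ] ℝ := φ.comp (ContinuousLinearMap.inl ℝ E ℝ) with hL
  have hLy : ∀ y, L y = φ (y, 0) := fun y => rfl
  set v : E := (InnerProductSpace.toDual ℝ E).symm L with hv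
  have hvy : ∀ y, ⟪v, y⟫ = L y := fun y => InnerProductSpace.toDual_symm_apply
  refine ⟨(-c⁻¹) • v, fun y => ?_⟩
  have h := key y
  rw [← hLy, ← hLy, ← hvy, ← hvy] at h
  have hinner : ⟪(-c⁻¹) • v, y - a⟫ = -c⁻¹ * (⟪v, y⟫ - ⟪v, a⟫) := by
    rw [real_inner_smul_left, inner_sub_right]
  rw [hinner]
  have hcne : c ≠ 0 := ne_of_gt hcpos
  have h5 : f a - f y ≤ (⟪v,y⟫ - ⟪v,a⟫) / c := (le_div_iff₀ hcpos).mpr (by nlinarith)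
  have h6 : -c⁻¹ * (⟪v,y⟫ - ⟪v,a⟫) = -((⟪v,y⟫ - ⟪v,a⟫)/c) := by field_simp
  linarith

/-- Constant step size, `inf_X f = -∞`: then
`liminf f (x k) = -∞` (in the extended reals). -/
theorem incremental_cp_constant_step_unbounded_below
    (n m W : ℕ) (hW : 1 ≤ W)
    (X : Set (EuclideanSpace ℝ (Fin n)))
    (hXne : X.Nonempty) (hXclosed : IsClosed X) (hXconvex : Convex ℝ X)
    (f : Fin m → EuclideanSpace ℝ (Fin n) → ℝ)
    (hfconv : ∀ i, ConvexOn ℝ Set.univ (f i))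
    (C : ℝ) (hC : 0 < C)
    -- every subgradient of any `f i` at any point of `X` has norm at most `C`
    (hCbound : ∀ i, ∀ z ∈ X, ∀ g : EuclideanSpace ℝ (Fin n),
      (∀ y, f i z + ⟪g, y - z⟫ ≤ f i y) → ‖g‖ ≤ C)
    -- `P` is the Euclidean projection onto `X`
    (P : EuclideanSpace ℝ (Fin n) → EuclideanSpace ℝ (Fin n))
    (hP : ∀ u, P u ∈ X ∧ ∀ y ∈ X, ‖u - P u‖ ≤ ‖u - y‖)
    -- positive step sizes
    (t : ℕ → ℝ) (ht : ∀ k, 0 < t k)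
    -- the iterates, lying in `X`
    (x : ℕ → EuclideanSpace ℝ (Fin n)) (hx : ∀ k, x k ∈ X)
    -- the index sets `B k i ⊆ {0, …, min k (W-1)}`
    (B : ℕ → Fin m → Finset ℕ)
    (hB : ∀ k i, ∀ l ∈ B k i, l ≤ min k (W - 1))
    -- `g i j` is a subgradient of `f i` at `x j` (used for `j = k - l`, `l ∈ B k i`)
    (g : Fin m → ℕ → EuclideanSpace ℝ (Fin n))
    (hg : ∀ k i, ∀ l ∈ B k i, ∀ y,
      f i (x (k - l)) + ⟪g i (k - l), y - x (k - l)⟫ ≤ f i y)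
    -- convex weights
    (α : ℕ → Fin m → ℕ → ℝ)
    (hα0 : ∀ k i l, 0 ≤ α k i l)
    (hα1 : ∀ k i, (B k i).Nonempty → ∑ l ∈ B k i, α k i l = 1)
    (hα2 : ∀ k i, B k i = ∅ → ∀ l, α k i l = 0)
    -- the update rule
    (hupdate : ∀ k, x (k + 1) =
      P (x k - t k • ∑ i : Fin m, ∑ l ∈ B k i, α k i l • g i (k - l)))    -- every component is evaluated at least once in every `W` iterations
    (hfull : ∀ k, W - 1 ≤ k → ∀ i, (B k i).Nonempty)
    -- constant step size
    (tc : ℝ) (htc : 0 < tc) (hconst : ∀ k, t k = tc)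
    -- `inf_{z ∈ X} f z = -∞`
    (hinf : ∀ M : ℝ, ∃ z ∈ X, (∑ i : Fin m, f i z) < M) :
    Filter.liminf (fun k => ((∑ i : Fin m, f i (x k) : ℝ) : EReal))
      Filter.atTop = ⊥ := by
  classical
  -- Lipschitz-type bound on `X`
  have hLip : ∀ (i : Fin m), ∀ a ∈ X, ∀ b, f i a - f i b ≤ C * ‖b - a‖ := by
    intro i a ha b
    obtain ⟨gg, hgg⟩ := exists_subgradient_aux (f i) (hfconv i) a
    have hnorm := hCbound i a ha gg hgg
    have h := hgg b
    have h2 : -⟪gg, b - a⟫ ≤ ‖gg‖ * ‖b - a‖ := by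
      have h3 := abs_real_inner_le_norm gg (b - a)
      linarith [neg_abs_le (⟪gg, b - a⟫ : ℝ)]
    have h3 : ‖gg‖ * ‖b - a‖ ≤ C * ‖b - a‖ :=
      mul_le_mul_of_nonneg_right hnorm (norm_nonneg _)
    linarith
  -- projection is nonexpansive towards points of `X`
  have hproj : ∀ u, ∀ z ∈ X, ‖P u - z‖ ≤ ‖u - z‖ := by
    intro u z hz
    obtain ⟨hPu, hmin⟩ := hP u
    have hbdd : BddBelow (Set.range fun w : X => ‖u - (w:EuclideanSpace ℝ (Fin n))‖) :=
      ⟨0, by rintro r ⟨w, rfl⟩; exact norm_nonneg _⟩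
    haveI : Nonempty X := ⟨⟨P u, hPu⟩⟩
    have hinfc : ‖u - P u‖ = ⨅ w : X, ‖u - (w : EuclideanSpace ℝ (Fin n))‖ := by
      apply le_antisymm
      · exact le_ciInf fun w => hmin w w.2
      · exact ciInf_le hbdd ⟨P u, hPu⟩
    have hchar := (norm_eq_iInf_iff_real_inner_le_zero hXconvex hPu).mp hinfc z hz
    have hexp : ‖u - z‖^2 = ‖u - P u‖^2 + 2 * ⟪u - P u, P u - z⟫ + ‖P u - z‖^2 := by
      have harr : u - z = (u - P u) + (P u - z) := by abel
      rw [harr, norm_add_sq_real]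
    have hip : 0 ≤ ⟪u - P u, P u - z⟫ := by
      have harr : ⟪u - P u, P u - z⟫ = -⟪u - P u, z - P u⟫ := by
        rw [← inner_neg_right]; congr 1; abel
      rw [harr]; linarith
    have hsq : ‖P u - z‖^2 ≤ ‖u - z‖^2 := by nlinarith [sq_nonneg ‖u - P u‖]
    have := Real.sqrt_le_sqrt hsq
    rwa [Real.sqrt_sq (norm_nonneg _), Real.sqrt_sq (norm_nonneg _)] at this
  -- subgradient norms
  have hgnorm : ∀ k (i : Fin m), ∀ l ∈ B k i, ‖g i (k - l)‖ ≤ C := fun k i l hl =>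
    hCbound i (x (k-l)) (hx _) (g i (k-l)) (hg k i l hl)
  -- the direction
  set d : ℕ → EuclideanSpace ℝ (Fin n) :=
    fun k => ∑ i : Fin m, ∑ l ∈ B k i, α k i l • g i (k - l) with hd
  have hxud : ∀ k, x (k+1) = P (x k - t k • d k) := by
    intro k
    rw [hupdate k]
  have hdnorm : ∀ k, ‖d k‖ ≤ m * C := by
    intro k
    have h1 : ∀ i : Fin m, ‖∑ l ∈ B k i, α k i l • g i (k - l)‖ ≤ C := by
      intro i
      calc ‖∑ l ∈ B k i, α k i l • g i (k - l)‖
          ≤ ∑ l ∈ B k i, ‖α k i l • g i (k - l)‖ := norm_sum_le _ _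
        _ ≤ ∑ l ∈ B k i, α k i l * C := by
            apply Finset.sum_le_sum; intro l hl
            rw [norm_smul, Real.norm_eq_abs, abs_of_nonneg (hα0 k i l)]
            exact mul_le_mul_of_nonneg_left (hgnorm k i l hl) (hα0 k i l)
        _ = (∑ l ∈ B k i, α k i l) * C := by rw [Finset.sum_mul]
        _ ≤ C := by
            rcases Finset.eq_empty_or_nonempty (B k i) with h | h
            · rw [h]; simp [hC.le]
            · rw [hα1 k i h, one_mul]
    calc ‖d k‖ ≤ ∑ i : Fin m, ‖∑ l ∈ B k i, α k i l • g i (k-l)‖ := norm_sum_le _ _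
      _ ≤ ∑ _i : Fin m, C := Finset.sum_le_sum fun i _ => h1 i
      _ = m * C := by simp [Finset.sum_const, Finset.card_univ, nsmul_eq_mul]
  set D : ℝ := tc * (m * C) with hD
  have hDnn : 0 ≤ D := by positivity
  have hstep : ∀ k, ‖x (k+1) - x k‖ ≤ D := by
    intro k
    rw [hxud k]
    have h1 := hproj (x k - t k • d k) (x k) (hx k)
    have h2 : ‖(x k - t k • d k) - x k‖ = t k * ‖d k‖ := by
      have harr : (x k - t k • d k) - x k = -(t k • d k) := by abel
      rw [harr, norm_neg, norm_smul, Real.norm_eq_abs, abs_of_pos (ht k)]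
    calc ‖P (x k - t k • d k) - x k‖ ≤ t k * ‖d k‖ := by rw [← h2]; exact h1
      _ ≤ D := by
          rw [hconst k, hD]
          exact mul_le_mul_of_nonneg_left (hdnorm k) htc.le
  have hlag : ∀ k l, l ≤ k → ‖x k - x (k - l)‖ ≤ l * D := by
    intro k l
    induction l with
    | zero => intro _; simp
    | succ l ih =>
      intro hlk
      have h1 : l ≤ k := Nat.le_of_succ_le hlk
      have h2 : k - l = (k - (l+1)) + 1 := by omega
      have h3 : ‖x k - x (k - (l+1))‖ ≤ ‖x k - x (k - l)‖ + ‖x (k - l) - x (k - (l+1))‖ := by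
        have harr : x k - x (k - (l+1)) = (x k - x (k-l)) + (x (k-l) - x (k-(l+1))) := by abel
        rw [harr]; exact norm_add_le _ _
      have h4 : ‖x (k - l) - x (k - (l+1))‖ ≤ D := by rw [h2]; exact hstep (k - (l+1))
      have h5 := ih h1
      push_cast
      push_cast at h5
      linarith
  set R : ℝ := ((W - 1 : ℕ) : ℝ) * D with hR
  have hRnn : 0 ≤ R := by positivity
  have hlagW : ∀ k (i : Fin m), ∀ l ∈ B k i, ‖x k - x (k - l)‖ ≤ R := by
    intro k i l hl
    have h1 := hB k i l hl
    have h2 : l ≤ k := le_trans h1 (min_le_left _ _)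
    have h3 : l ≤ W - 1 := le_trans h1 (min_le_right _ _)
    calc ‖x k - x (k-l)‖ ≤ l * D := hlag k l h2
      _ ≤ R := mul_le_mul_of_nonneg_right (by exact_mod_cast h3) hDnn
  -- key per-term bound
  have hterm : ∀ k (i : Fin m), ∀ l ∈ B k i, ∀ z ∈ X,
      f i (x k) - f i z - 2*C*R ≤ ⟪g i (k - l), x k - z⟫ := by
    intro k i l hl z hz
    set gi := g i (k - l) with hgi
    have hsplit : ⟪gi, x k - z⟫ = ⟪gi, x k - x (k-l)⟫ + ⟪gi, x (k-l) - z⟫ := by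
      rw [← inner_add_right]; congr 1; abel
    have hCS : |⟪gi, x k - x (k-l)⟫| ≤ C * R :=
      le_trans (abs_real_inner_le_norm _ _)
        (mul_le_mul (hgnorm k i l hl) (hlagW k i l hl) (norm_nonneg _) hC.le)
    have hA := hg k i l hl z
    have hflip : ⟪gi, z - x (k-l)⟫ = -⟪gi, x (k-l) - z⟫ := by
      rw [← inner_neg_right]; congr 1; abel
    rw [hflip] at hA
    have hLipterm : f i (x k) - f i (x (k-l)) ≤ C * R := by
      have h6 := hLip i (x k) (hx k) (x (k-l))
      have h7 : ‖x (k-l) - x k‖ = ‖x k - x (k-l)‖ := norm_sub_rev _ _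
      have h8 : C * ‖x k - x (k-l)‖ ≤ C * R :=
        mul_le_mul_of_nonneg_left (hlagW k i l hl) hC.le
      rw [h7] at h6; linarith
    have h9 := neg_abs_le (⟪gi, x k - x (k-l)⟫ : ℝ)
    linarith [hsplit, hA, hLipterm]
  -- descent inequality
  set EE : ℝ := 2*tc*((m:ℝ)*(2*C*R)) + D^2 with hEE
  have hEnn : 0 ≤ EE := by positivity
  have hdesc : ∀ z ∈ X, ∀ k, W - 1 ≤ k →
      ‖x (k+1) - z‖^2 ≤ ‖x k - z‖^2
        - 2*tc*((∑ i : Fin m, f i (x k)) - ∑ i : Fin m, f i z) + EE := by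
    intro z hz k hk
    have h1 : ‖x (k+1) - z‖ ≤ ‖(x k - z) - tc • d k‖ := by
      rw [hxud k, hconst k]
      have h := hproj (x k - tc • d k) z hz
      have harr : x k - tc • d k - z = (x k - z) - tc • d k := by abel
      rwa [harr] at h
    have h1' : ‖x (k+1) - z‖^2 ≤ ‖(x k - z) - tc • d k‖^2 :=
      pow_le_pow_left₀ (norm_nonneg _) h1 2
    have h2 : ‖(x k - z) - tc • d k‖^2
        = ‖x k - z‖^2 - 2*tc*⟪d k, x k - z⟫ + tc^2 * ‖d k‖^2 := by
      rw [norm_sub_sq_real, real_inner_smul_right, norm_smul, Real.norm_eq_abs,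
        abs_of_pos htc, mul_pow, real_inner_comm]
      ring
    have hdip : ⟪d k, x k - z⟫
        = ∑ i : Fin m, ∑ l ∈ B k i, α k i l * ⟪g i (k-l), x k - z⟫ := by
      rw [hd]
      rw [sum_inner]
      apply Finset.sum_congr rfl; intro i _
      rw [sum_inner]
      apply Finset.sum_congr rfl; intro l _
      rw [real_inner_smul_left]
    have h3 : ∀ i : Fin m,
        f i (x k) - f i z - 2*C*R ≤ ∑ l ∈ B k i, α k i l * ⟪g i (k-l), x k - z⟫ := by
      intro i
      have hne := hfull k hk i
      have hsum1 : ∑ l ∈ B k i, α k i l * (f i (x k) - f i z - 2*C*R)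
          = f i (x k) - f i z - 2*C*R := by
        rw [← Finset.sum_mul, hα1 k i hne, one_mul]
      rw [← hsum1]
      exact Finset.sum_le_sum fun l hl =>
        mul_le_mul_of_nonneg_left (hterm k i l hl z hz) (hα0 k i l)
    have h4 : (∑ i : Fin m, f i (x k)) - (∑ i : Fin m, f i z) - (m:ℝ)*(2*C*R)
        ≤ ⟪d k, x k - z⟫ := by
      rw [hdip]
      have hLHS : (∑ i : Fin m, f i (x k)) - (∑ i : Fin m, f i z) - (m:ℝ)*(2*C*R)
          = ∑ i : Fin m, (f i (x k) - f i z - 2*C*R) := by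
        simp [Finset.sum_sub_distrib, Finset.sum_const, Finset.card_univ, nsmul_eq_mul]
      rw [hLHS]
      exact Finset.sum_le_sum fun i _ => h3 i
    have h5 : tc^2 * ‖d k‖^2 ≤ D^2 := by
      have h6 := hdnorm k
      have h6' : ‖d k‖^2 ≤ ((m:ℝ)*C)^2 := by nlinarith [norm_nonneg (d k)]
      rw [hD, mul_pow]
      exact mul_le_mul_of_nonneg_left h6' (sq_nonneg tc)
    have h7 := mul_le_mul_of_nonneg_left h4 (by positivity : (0:ℝ) ≤ 2*tc)
    calc ‖x (k+1) - z‖^2 ≤ ‖(x k - z) - tc • d k‖^2 := h1'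
      _ = ‖x k - z‖^2 - 2*tc*⟪d k, x k - z⟫ + tc^2 * ‖d k‖^2 := h2
      _ ≤ ‖x k - z‖^2
          - 2*tc*((∑ i : Fin m, f i (x k)) - ∑ i : Fin m, f i z) + EE := by
          rw [hEE]; linarith
  -- final contradiction
  by_contra hne
  have hbot : (⊥:EReal) < Filter.liminf
      (fun k => ((∑ i : Fin m, f i (x k) : ℝ) : EReal)) Filter.atTop := Ne.bot_lt hne
  obtain ⟨M, _, hM2⟩ := EReal.exists_between_coe_real hbot
  have hev : ∀ᶠ k in Filter.atTop,
      (M:EReal) < ((∑ i : Fin m, f i (x k) : ℝ) : EReal) :=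
    Filter.eventually_lt_of_lt_liminf hM2
  obtain ⟨N₀, hN₀⟩ := Filter.eventually_atTop.mp hev
  have hN₀' : ∀ k, N₀ ≤ k → M < ∑ i : Fin m, f i (x k) := by
    intro k hk
    exact_mod_cast hN₀ k hk
  obtain ⟨z, hzX, hzval⟩ := hinf (M - (EE + 2*tc)/(2*tc))
  set N := max N₀ (W - 1) with hN
  have hdec : ∀ k, N ≤ k → ‖x (k+1) - z‖^2 ≤ ‖x k - z‖^2 - 2*tc := by
    intro k hk
    have h1 := hdesc z hzX k (le_trans (le_max_right _ _) hk)
    have h2 := hN₀' k (le_trans (le_max_left _ _) hk)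
    have hQ : 2*tc*((EE + 2*tc)/(2*tc)) = EE + 2*tc := by field_simp
    have h3 : EE + 2*tc < 2*tc*((∑ i : Fin m, f i (x k)) - ∑ i : Fin m, f i z) := by
      rw [← hQ]
      apply mul_lt_mul_of_pos_left _ (by positivity : (0:ℝ) < 2*tc)
      linarith
    linarith
  have hiter : ∀ j : ℕ, ‖x (N + j) - z‖^2 ≤ ‖x N - z‖^2 - 2*tc*j := by
    intro j
    induction j with
    | zero => simp
    | succ j ih =>
      have h1 := hdec (N + j) (Nat.le_add_right _ _)
      have h2 : N + (j+1) = (N + j) + 1 := by omega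
      rw [h2]
      push_cast
      push_cast at ih
      linarith
  obtain ⟨j, hj⟩ := exists_nat_gt (‖x N - z‖^2 / (2*tc))
  have hj2 : ‖x N - z‖^2 < 2*tc*j := by
    rw [div_lt_iff₀ (by positivity : (0:ℝ) < 2*tc)] at hj
    linarith
  have := hiter j
  nlinarith [sq_nonneg ‖x (N + j) - z‖]
end
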